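/- If a fee sharing function f : (k, i) ↦ f_i^k with ∑_{i=1}^k f_i^k = F for all k satisfies f_i^k ≥ f_i^{k+1} + f_{i+1}^{k+1} for all 1 ≤ i ≤ k, then f_1^{k+1} + f_{k+1}^{k+1} ≥ F. -/

import Mathlib

theorem stmt_0 (F : ℝ) (hF : 0 < F) (f : ℕ → ℕ → ℝ)
    (hsum : ∀ k : ℕ, 1 ≤ k → ∑ i ∈ Finset.Icc 1 k, f k i = F)
    (hsybil : ∀ k : ℕ, 1 ≤ k → ∀ i : ℕ, 1 ≤ i → i ≤ k →
      f k i ≥ f (k+1) i + f (k+1) (i+1)) :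
    ∀ k : ℕ, 1 ≤ k → f (k+1) 1 + f (k+1) (k+1) ≥ F := by
  intro k hk
  have hle : ∑ i ∈ Finset.Icc 1 k, (f (k+1) i + f (k+1) (i+1))
      ≤ ∑ i ∈ Finset.Icc 1 k, f k i := by
    apply Finset.sum_le_sum
    intro i hi
    simp only [Finset.mem_Icc] at hi
    exact hsybil k hk i hi.1 hi.2
  rw [hsum k hk, Finset.sum_add_distrib] at hle
  -- first sum: ∑_{1..k} f' i = F - f'(k+1)
  have h1 : ∑ i ∈ Finset.Icc 1 k, f (k+1) i + f (k+1) (k+1) = F := by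
    rw [← Finset.sum_Icc_succ_top (by omega : 1 ≤ k + 1)]
    exact hsum (k+1) (by omega)
  -- second sum: ∑_{1..k} f' (i+1) = ∑_{2..k+1} f' i = F - f' 1
  have h2 : f (k+1) 1 + ∑ i ∈ Finset.Icc 1 k, f (k+1) (i+1) = F := by
    have : ∑ i ∈ Finset.Icc 1 k, f (k+1) (i+1)
        = ∑ i ∈ Finset.Icc 2 (k+1), f (k+1) i := by
      apply Finset.sum_nbij' (fun i => i + 1) (fun i => i - 1) <;>
        intro i hi <;> simp only [Finset.mem_Icc] at * <;> omega
    rw [this]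
    have hsplit : Finset.Icc 1 (k+1) = insert 1 (Finset.Icc 2 (k+1)) := by
      ext x; simp only [Finset.mem_Icc, Finset.mem_insert]; omega
    have := hsum (k+1) (by omega)
    rw [hsplit, Finset.sum_insert (by simp)] at this
    exact this
  linarith
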